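/- (Lemma 8.3 of the paper.) Let N1, N3, m ≥ 1 and ρ ∈ (0,1). Let z : Fin N1 → EuclideanSpace ℝ (Fin N3) be nonzero, set ‖z‖_F² = ∑_i ‖z(i)‖², μ(z) = N1 · (max_i ‖z(i)‖²) / ‖z‖_F², and α = sqrt(2·μ(z)·log(1/ρ)/m) + (2·μ(z)/(3m))·log(1/ρ). Let S : Fin m → Fin N1 be m indices drawn independently and uniformly at random. Then with probability at least 1 − 2ρ, (1 − α)·(m/N1)·‖z‖_F² ≤ ∑_{l : Fin m} ‖z(S(l))‖² ≤ (1 + α)·(m/N1)·‖z‖_F². -/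

import Mathlib

open scoped BigOperators Classical

/-- Total energy `‖z‖_F²` of a family of tubes. -/
noncomputable def tubeEnergy {N1 N3 : ℕ} (z : Fin N1 → EuclideanSpace ℝ (Fin N3)) : ℝ :=
  ∑ i : Fin N1, ‖z i‖ ^ 2

/-- Incoherence `μ(z) = N1 · max_i ‖z(i)‖² / ‖z‖_F²`. -/
noncomputable def tubeIncoherence {N1 N3 : ℕ} [NeZero N1]
    (z : Fin N1 → EuclideanSpace ℝ (Fin N3)) : ℝ :=
  (N1 : ℝ) * (Finset.univ.sup' Finset.univ_nonempty fun i : Fin N1 => ‖z i‖ ^ 2) /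
    tubeEnergy z

/-- The quantity `α` of Lemma 8.3. -/
noncomputable def alphaConst {N1 N3 : ℕ} [NeZero N1]
    (z : Fin N1 → EuclideanSpace ℝ (Fin N3)) (m : ℕ) (ρ : ℝ) : ℝ :=
  Real.sqrt (2 * tubeIncoherence z * Real.log (1 / ρ) / m) +
    2 * tubeIncoherence z / (3 * m) * Real.log (1 / ρ)

section Aux

private lemma real_exp_eq_tsum' (x : ℝ) : Real.exp x = ∑' n : ℕ, x ^ n / (Nat.factorial n : ℝ) := by
  rw [Real.exp_eq_exp_ℝ, NormedSpace.exp_eq_tsum_div]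

private lemma quad_le_exp' {x : ℝ} (hx : 0 ≤ x) : 1 + x + x ^ 2 / 2 ≤ Real.exp x := by
  rw [real_exp_eq_tsum']
  have h := Summable.sum_le_tsum (Finset.range 3) (fun n _ => by positivity)
    (Real.summable_pow_div_factorial x)
  refine le_trans (le_of_eq ?_) h
  norm_num [Finset.sum_range_succ]

private lemma exp_neg_le_quad' {x : ℝ} (hx : 0 ≤ x) : Real.exp (-x) ≤ 1 - x + x ^ 2 / 2 := by
  have h := quad_le_exp' hx
  have hq : (0:ℝ) < 1 + x + x ^ 2 / 2 := by positivity
  rw [Real.exp_neg]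
  rw [inv_le_iff_one_le_mul₀ (lt_of_lt_of_le hq h)]
  nlinarith [Real.exp_pos x, sq_nonneg x, sq_nonneg (x^2)]

private lemma factorial_ge' (n : ℕ) : 2 * 3 ^ n ≤ Nat.factorial (n + 2) := by
  induction n with
  | zero => norm_num
  | succ k ih =>
    have h : Nat.factorial (k + 3) = (k + 3) * Nat.factorial (k + 2) := rfl
    have h2 := Nat.factorial_pos (k+2)
    calc 2 * 3 ^ (k+1) = 3 * (2 * 3 ^ k) := by ring
    _ ≤ 3 * Nat.factorial (k+2) := by omega
    _ ≤ (k + 3) * Nat.factorial (k+2) := by nlinarith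
    _ = Nat.factorial (k+3) := h.symm

private lemma exp_le_quad' {x : ℝ} (hx : 0 ≤ x) (hx3 : x < 3) :
    Real.exp x ≤ 1 + x + x ^ 2 / 2 * (3 / (3 - x)) := by
  have hsum := Real.summable_pow_div_factorial x
  have hsum1 : Summable (fun n : ℕ => x ^ (n+1) / (Nat.factorial (n+1) : ℝ)) :=
    (summable_nat_add_iff (f := fun n : ℕ => x ^ n / (Nat.factorial n : ℝ)) 1).mpr hsum
  have hsum2 : Summable (fun n : ℕ => x ^ (n+1+1) / (Nat.factorial (n+1+1) : ℝ)) :=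
    (summable_nat_add_iff (f := fun n : ℕ => x ^ n / (Nat.factorial n : ℝ)) 2).mpr hsum
  have hgeo : Summable (fun n : ℕ => x ^ 2 / 2 * (x/3) ^ n) :=
    Summable.mul_left _ (summable_geometric_of_lt_one (by positivity) (by linarith))
  have hterm : ∀ n : ℕ, x ^ (n+1+1) / (Nat.factorial (n+1+1) : ℝ) ≤ x ^ 2 / 2 * (x/3) ^ n := by
    intro n
    have hf : (2 * 3 ^ n : ℝ) ≤ (Nat.factorial (n+2) : ℝ) := by exact_mod_cast factorial_ge' n
    have h2 : (0:ℝ) < (Nat.factorial (n+2) : ℝ) := by exact_mod_cast Nat.factorial_pos (n+2)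
    have h3 : (0:ℝ) < (3:ℝ)^n := by positivity
    have hxn : (0:ℝ) ≤ x ^ n := by positivity
    have key : x ^ (n+2) * (2 * 3 ^ n) ≤ (x ^ 2 / 2 * (x/3)^n) * (2 * 3^n) * (Nat.factorial (n+2) : ℝ) := by
      have e1 : (x ^ 2 / 2 * (x/3)^n) * (2 * 3^n) = x ^ (n+2) := by
        rw [div_pow]; field_simp; ring
      rw [e1]
      nlinarith [pow_nonneg hx (n+2)]
    show x ^ (n+2) / (Nat.factorial (n+2) : ℝ) ≤ x ^ 2 / 2 * (x/3) ^ n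
    rw [div_le_iff₀ h2]
    have h6 : (0:ℝ) < 2 * 3 ^ n := by positivity
    nlinarith [key]
  have htail : ∑' n : ℕ, x ^ (n+1+1) / (Nat.factorial (n+1+1) : ℝ) ≤ x ^ 2 / 2 * (3 / (3 - x)) := by
    refine (Summable.tsum_le_tsum hterm hsum2 hgeo).trans ?_
    rw [tsum_mul_left, tsum_geometric_of_lt_one (by positivity) (by linarith)]
    rw [inv_eq_one_div, show (1 : ℝ) - x/3 = (3-x)/3 by ring, one_div_div]
  calc Real.exp x = ∑' n : ℕ, x ^ n / (Nat.factorial n : ℝ) := real_exp_eq_tsum' x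
  _ = x ^ 0 / (Nat.factorial 0 : ℝ) + ∑' n : ℕ, x ^ (n+1) / (Nat.factorial (n+1) : ℝ) :=
      Summable.tsum_eq_zero_add hsum
  _ = x ^ 0 / (Nat.factorial 0 : ℝ) + (x ^ (0+1) / (Nat.factorial (0+1) : ℝ)
        + ∑' n : ℕ, x ^ (n+1+1) / (Nat.factorial (n+1+1) : ℝ)) := by
      rw [Summable.tsum_eq_zero_add hsum1]
  _ ≤ 1 + x + x ^ 2 / 2 * (3 / (3 - x)) := by
      simp only [pow_zero, Nat.factorial_zero, pow_one, Nat.factorial_one, Nat.cast_one]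
      norm_num
      linarith [htail]

private lemma count_chernoff' {N1 m : ℕ} (f : Fin N1 → ℝ) (lam a : ℝ)
    (p : (Fin m → Fin N1) → Prop) [DecidablePred p]
    (hp : ∀ S, p S → lam * a ≤ lam * ∑ l : Fin m, f (S l)) :
    ((Finset.univ.filter p).card : ℝ) ≤
      Real.exp (-(lam * a)) * (∑ i : Fin N1, Real.exp (lam * f i)) ^ m := by
  have step1 : ((Finset.univ.filter p).card : ℝ)
      ≤ ∑ S ∈ Finset.univ.filter p, Real.exp (lam * (∑ l : Fin m, f (S l)) - lam * a) := by
    rw [Finset.card_eq_sum_ones, Nat.cast_sum]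
    refine Finset.sum_le_sum fun S hS => ?_
    simp only [Nat.cast_one]
    refine Real.one_le_exp ?_
    have := hp S (Finset.mem_filter.mp hS).2
    linarith
  have step2 : ∑ S ∈ Finset.univ.filter p, Real.exp (lam * (∑ l : Fin m, f (S l)) - lam * a)
      ≤ ∑ S : Fin m → Fin N1, Real.exp (lam * (∑ l : Fin m, f (S l)) - lam * a) :=
    Finset.sum_le_sum_of_subset_of_nonneg (Finset.filter_subset _ _)
      (fun S _ _ => (Real.exp_pos _).le)
  have step3 : ∑ S : Fin m → Fin N1, Real.exp (lam * (∑ l : Fin m, f (S l)) - lam * a)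
      = Real.exp (-(lam * a)) * (∑ i : Fin N1, Real.exp (lam * f i)) ^ m := by
    rw [Finset.sum_pow']
    rw [Fintype.piFinset_univ, Finset.mul_sum]
    refine Finset.sum_congr rfl fun S _ => ?_
    rw [← Real.exp_sum, ← Real.exp_add]
    congr 1
    rw [Finset.mul_sum]
    ring
  linarith [step1, step2, step3.le]

private lemma tail_bound' {N1 m : ℕ} (hN1 : 0 < N1) (f g : Fin N1 → ℝ) (lam a E : ℝ)
    (p : (Fin m → Fin N1) → Prop) [DecidablePred p]
    (hp : ∀ S, p S → lam * a ≤ lam * ∑ l : Fin m, f (S l))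
    (hpt : ∀ i, Real.exp (lam * f i) ≤ 1 + g i)
    (hE : (m : ℝ) * ((∑ i, g i) / N1) - lam * a ≤ E) :
    ((Finset.univ.filter p).card : ℝ) ≤ (N1:ℝ)^m * Real.exp E := by
  have hN1R : (0:ℝ) < N1 := by exact_mod_cast hN1
  have havg : ∑ i : Fin N1, Real.exp (lam * f i) ≤ (N1:ℝ) * Real.exp ((∑ i, g i) / N1) := by
    calc ∑ i : Fin N1, Real.exp (lam * f i) ≤ ∑ i : Fin N1, (1 + g i) :=
          Finset.sum_le_sum fun i _ => hpt i
    _ = (N1:ℝ) + ∑ i, g i := by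
          rw [Finset.sum_add_distrib]; simp
    _ = (N1:ℝ) * (1 + (∑ i, g i) / N1) := by field_simp
    _ ≤ (N1:ℝ) * Real.exp ((∑ i, g i) / N1) := by
          have := Real.add_one_le_exp ((∑ i, g i) / N1)
          nlinarith
  calc ((Finset.univ.filter p).card : ℝ)
      ≤ Real.exp (-(lam * a)) * (∑ i : Fin N1, Real.exp (lam * f i)) ^ m :=
        count_chernoff' f lam a p hp
  _ ≤ Real.exp (-(lam * a)) * ((N1:ℝ) * Real.exp ((∑ i, g i) / N1)) ^ m := by
        refine mul_le_mul_of_nonneg_left ?_ (Real.exp_pos _).le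
        refine pow_le_pow_left₀ ?_ havg m
        exact Finset.sum_nonneg fun i _ => (Real.exp_pos _).le
  _ = (N1:ℝ)^m * Real.exp ((m:ℝ) * ((∑ i, g i) / N1) - lam * a) := by
        rw [mul_pow, ← Real.exp_nat_mul, ← mul_assoc, mul_comm (Real.exp _), mul_assoc,
          ← Real.exp_add]
        congr 1
        ring
  _ ≤ (N1:ℝ)^m * Real.exp E := by
        refine mul_le_mul_of_nonneg_left (Real.exp_le_exp.mpr hE) (by positivity)

end Aux

private lemma main_count {N1 m : ℕ} (hN1 : 0 < N1) (hm : 1 ≤ m) (f : Fin N1 → ℝ)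
    (b ρ α : ℝ) (hρ0 : 0 < ρ) (hρ1 : ρ < 1)
    (hf0 : ∀ i, 0 ≤ f i) (hfb : ∀ i, f i ≤ b) (hFpos : 0 < ∑ i, f i)
    (hα : α = Real.sqrt (2 * ((N1:ℝ) * b / ∑ i, f i) * Real.log (1/ρ) / m)
      + 2 * ((N1:ℝ) * b / ∑ i, f i) / (3 * m) * Real.log (1/ρ)) :
    1 - 2 * ρ ≤
      ((Finset.univ.filter fun S : Fin m → Fin N1 =>
          (1 - α) * ((m : ℝ) / N1) * (∑ i, f i) ≤ ∑ l : Fin m, f (S l) ∧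
            ∑ l : Fin m, f (S l) ≤ (1 + α) * ((m : ℝ) / N1) * (∑ i, f i)).card : ℝ)
        / (N1 : ℝ) ^ m := by
  classical
  have hN1R : (0:ℝ) < N1 := by exact_mod_cast hN1
  have hmR : (0:ℝ) < m := by exact_mod_cast hm
  have hN1ne : (N1:ℝ) ≠ 0 := ne_of_gt hN1R
  have hmne : (m:ℝ) ≠ 0 := ne_of_gt hmR
  set F : ℝ := ∑ i, f i with hFdef
  set V : ℝ := ∑ i, f i ^ 2 with hVdef
  obtain ⟨i₀, hfi₀⟩ : ∃ i, 0 < f i := by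
    by_contra h
    push_neg at h
    exact absurd (Finset.sum_nonpos fun i _ => h i) (not_le.mpr hFpos)
  have hbpos : 0 < b := lt_of_lt_of_le hfi₀ (hfb i₀)
  have hVpos : 0 < V :=
    Finset.sum_pos' (fun i _ => sq_nonneg _) ⟨i₀, Finset.mem_univ i₀, pow_pos hfi₀ 2⟩
  have hVbF : V ≤ b * F := by
    rw [hVdef, hFdef, Finset.mul_sum]
    refine Finset.sum_le_sum fun i _ => ?_
    have h1 := hfb i; have h2 := hf0 i; nlinarith [mul_le_mul_of_nonneg_right (hfb i) (hf0 i)]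
  clear_value F V
  set e : ℝ := F / N1 with hedef
  set v : ℝ := V / N1 with hvdef
  have hepos : 0 < e := div_pos hFpos hN1R
  have hvpos : 0 < v := div_pos hVpos hN1R
  have hFe : F = N1 * e := by rw [hedef]; field_simp
  have hVv : V = N1 * v := by rw [hvdef]; field_simp
  clear_value e v
  have hvbe : v ≤ b * e := by
    rw [hFe, hVv] at hVbF
    have hNbe := (mul_le_mul_iff_right₀ hN1R).mp (by linarith only [hVbF] : (N1:ℝ) * v ≤ (N1:ℝ) * (b * e))
    exact hNbe
  set β : ℝ := Real.log (1 / ρ) with hβdef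
  have hβpos : 0 < β := by
    rw [hβdef]
    refine Real.log_pos ?_
    rw [lt_div_iff₀ hρ0]
    linarith only [hρ1]
  have hexpβ : Real.exp (-β) = ρ := by
    rw [hβdef, one_div, Real.log_inv, neg_neg, Real.exp_log hρ0]
  clear_value β
  set μ : ℝ := (N1:ℝ) * b / F with hμdef
  have hμpos : 0 < μ := by
    rw [hμdef]; exact div_pos (mul_pos hN1R hbpos) hFpos
  have hbμe : b = μ * e := by
    rw [hμdef, hFe]
    field_simp
  clear_value μ
  set s : ℝ := Real.sqrt (2 * μ * β / m) with hsdef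
  have harg : 0 < 2 * μ * β / m :=
    div_pos (mul_pos (by linarith [hμpos]) hβpos) hmR
  have hs2 : s ^ 2 = 2 * μ * β / m := Real.sq_sqrt harg.le
  have hspos : 0 < s := Real.sqrt_pos.mpr harg
  clear_value s
  have hαs : α = s + s ^ 2 / 3 := by
    rw [hα, hs2]
    field_simp
  have hαpos : 0 < α := by
    rw [hαs]; have h := sq_nonneg s; linarith only [h, hspos]
  set t : ℝ := α * ((m:ℝ) * e) with htdef
  have htpos : 0 < t := by
    rw [htdef]; exact mul_pos hαpos (mul_pos hmR hepos)
  clear_value t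
  have hms2 : (m:ℝ) * s ^ 2 = 2 * μ * β := by
    rw [hs2]; field_simp
  -- key scalar inequalities
  have hkey1 : s ^ 2 * (1 + α / 3) ≤ α ^ 2 := by
    have hdiff : α ^ 2 - s ^ 2 * (1 + α / 3) = s ^ 3 / 3 := by rw [hαs]; ring
    have h3 : 0 ≤ s ^ 3 := pow_nonneg hspos.le 3
    linarith only [hdiff, h3]
  have h2U : 2 * β * ((m:ℝ) * (b * e) + b * t / 3) = s ^ 2 * (1 + α / 3) * ((m:ℝ) * e) ^ 2 := by
    rw [hbμe, htdef]
    linear_combination (-(1 + α/3) * e^2 * (m:ℝ)) * hms2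
  have h2βm : (0:ℝ) ≤ 2 * β * (m:ℝ) :=
    mul_nonneg (mul_nonneg (by norm_num) hβpos.le) hmR.le
  have h1ke : 2 * β * (m:ℝ) * v ≤ 2 * β * (m:ℝ) * (b * e) :=
    mul_le_mul_of_nonneg_left hvbe h2βm
  have hkeyU : 2 * β * ((m:ℝ) * v + b * t / 3) ≤ t ^ 2 := by
    have h3 : s ^ 2 * (1 + α / 3) * ((m:ℝ) * e) ^ 2 ≤ α ^ 2 * ((m:ℝ) * e) ^ 2 :=
      mul_le_mul_of_nonneg_right hkey1 (sq_nonneg _)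
    have h4 : t ^ 2 = α ^ 2 * ((m:ℝ) * e) ^ 2 := by rw [htdef]; ring
    linarith only [h1ke, h2U, h3, h4]
  have h2L : 2 * β * ((m:ℝ) * (b * e)) = s ^ 2 * ((m:ℝ) * e) ^ 2 := by
    rw [hbμe]
    linear_combination (-(e^2) * (m:ℝ)) * hms2
  have hkeyL : 2 * β * ((m:ℝ) * v) ≤ t ^ 2 := by
    have hsa : s ≤ α := by rw [hαs]; have h := sq_nonneg s; linarith only [h]
    have hs2a : s ^ 2 ≤ α ^ 2 := pow_le_pow_left₀ hspos.le hsa 2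
    have h3 : s ^ 2 * ((m:ℝ) * e) ^ 2 ≤ α ^ 2 * ((m:ℝ) * e) ^ 2 :=
      mul_le_mul_of_nonneg_right hs2a (sq_nonneg _)
    have h4 : t ^ 2 = α ^ 2 * ((m:ℝ) * e) ^ 2 := by rw [htdef]; ring
    linarith only [h1ke, h2L, h3, h4]
  -- threshold identities
  have haU : (1 + α) * ((m : ℝ) / N1) * F = (m:ℝ) * e + t := by
    rw [htdef, hFe]; field_simp
  have haL : (1 - α) * ((m : ℝ) / N1) * F = (m:ℝ) * e - t := by
    rw [htdef, hFe]; field_simp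
  have hmv : (0:ℝ) < (m:ℝ) * v := mul_pos hmR hvpos
  have hbt : (0:ℝ) < b * t := mul_pos hbpos htpos
  -- upper tail
  have cardU : ((Finset.univ.filter fun S : Fin m → Fin N1 =>
        (1 + α) * ((m : ℝ) / N1) * F ≤ ∑ l : Fin m, f (S l)).card : ℝ)
      ≤ (N1:ℝ)^m * ρ := by
    set D : ℝ := (m:ℝ) * v + b * t / 3 with hDdef
    have hDpos : 0 < D := by rw [hDdef]; linarith only [hmv, hbt]
    set lam : ℝ := t / D with hlamdef
    have hlampos : 0 < lam := div_pos htpos hDpos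
    clear_value D lam
    have hDne : D ≠ 0 := ne_of_gt hDpos
    have hlamb : lam * b < 3 := by
      rw [hlamdef, div_mul_eq_mul_div, div_lt_iff₀ hDpos, hDdef]
      linarith only [hmv]
    set c : ℝ := D / ((m:ℝ) * v) with hcdef
    have hcpos : 0 < c := div_pos hDpos hmv
    clear_value c
    have hc3 : 3 / (3 - lam * b) = c := by
      have h1 : (3:ℝ) - lam * b = 3 * ((m:ℝ) * v) / D := by
        rw [hlamdef, hDdef]
        field_simp
        ring
      have h2 : (0:ℝ) < 3 * ((m:ℝ) * v) := by linarith only [hmv]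
      rw [h1, hcdef, div_div_eq_mul_div, div_eq_div_iff (ne_of_gt h2) (ne_of_gt hmv)]
      ring
    have hpt : ∀ i, Real.exp (lam * f i) ≤
        1 + (lam * f i + (lam * f i) ^ 2 / 2 * c) := by
      intro i
      have hx0 : 0 ≤ lam * f i := mul_nonneg hlampos.le (hf0 i)
      have hxb : lam * f i ≤ lam * b := mul_le_mul_of_nonneg_left (hfb i) hlampos.le
      have hx3 : lam * f i < 3 := lt_of_le_of_lt hxb hlamb
      have hq := exp_le_quad' hx0 hx3
      have hmon : 3 / (3 - lam * f i) ≤ c := by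
        rw [← hc3]
        exact div_le_div_of_nonneg_left (by norm_num) (by linarith) (by linarith)
      have hsq : (0:ℝ) ≤ (lam * f i)^2 / 2 := by positivity
      linarith only [hq, mul_le_mul_of_nonneg_left hmon hsq]
    have hg : ∑ i, (lam * f i + (lam * f i) ^ 2 / 2 * c)
        = lam * F + lam ^ 2 * V * c / 2 := by
      calc ∑ i, (lam * f i + (lam * f i) ^ 2 / 2 * c)
          = ∑ i, (lam * f i + (lam ^ 2 * c / 2) * f i ^ 2) :=
            Finset.sum_congr rfl fun i _ => by ring
      _ = lam * ∑ i, f i + (lam ^ 2 * c / 2) * ∑ i, f i ^ 2 := by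
            rw [Finset.sum_add_distrib, Finset.mul_sum, Finset.mul_sum]
      _ = lam * F + lam ^ 2 * V * c / 2 := by rw [← hFdef, ← hVdef]; ring
    have hE : (m : ℝ) * ((∑ i, (lam * f i + (lam * f i) ^ 2 / 2 * c)) / N1)
        - lam * ((1 + α) * ((m : ℝ) / N1) * F) ≤ -β := by
      rw [hg, haU]
      have hid : (m : ℝ) * ((lam * F + lam ^ 2 * V * c / 2) / N1)
          - lam * ((m:ℝ) * e + t) = -(t ^ 2 / (2 * D)) := by
        rw [hFe, hVv, hlamdef, hcdef]
        field_simp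
        ring
      rw [hid]
      have h2D : (0:ℝ) < 2 * D := by linarith only [hDpos]
      have hβle : β ≤ t ^ 2 / (2 * D) := by
        rw [le_div_iff₀ h2D]
        linarith only [hkeyU]
      linarith only [hβle]
    have hb := tail_bound' hN1 f (fun i => lam * f i + (lam * f i) ^ 2 / 2 * c) lam
      ((1 + α) * ((m : ℝ) / N1) * F) (-β)
      (fun S : Fin m → Fin N1 => (1 + α) * ((m : ℝ) / N1) * F ≤ ∑ l : Fin m, f (S l))
      (fun S hS => mul_le_mul_of_nonneg_left hS hlampos.le) hpt hE
    rw [hexpβ] at hb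
    exact hb
  -- lower tail
  have cardL : ((Finset.univ.filter fun S : Fin m → Fin N1 =>
        (∑ l : Fin m, f (S l)) ≤ (1 - α) * ((m : ℝ) / N1) * F).card : ℝ)
      ≤ (N1:ℝ)^m * ρ := by
    set lam : ℝ := t / ((m:ℝ) * v) with hlamdef
    have hlampos : 0 < lam := div_pos htpos hmv
    clear_value lam
    have hpt : ∀ i, Real.exp ((-lam) * f i) ≤
        1 + (-(lam * f i) + (lam * f i) ^ 2 / 2) := by
      intro i
      have hx0 : 0 ≤ lam * f i := mul_nonneg hlampos.le (hf0 i)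
      have hq := exp_neg_le_quad' hx0
      have : (-lam) * f i = -(lam * f i) := by ring
      rw [this]
      linarith only [hq]
    have hg : ∑ i, (-(lam * f i) + (lam * f i) ^ 2 / 2)
        = -(lam * F) + lam ^ 2 * V / 2 := by
      calc ∑ i, (-(lam * f i) + (lam * f i) ^ 2 / 2)
          = ∑ i, ((-lam) * f i + (lam ^ 2 / 2) * f i ^ 2) :=
            Finset.sum_congr rfl fun i _ => by ring
      _ = (-lam) * ∑ i, f i + (lam ^ 2 / 2) * ∑ i, f i ^ 2 := by
            rw [Finset.sum_add_distrib, Finset.mul_sum, Finset.mul_sum]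
      _ = -(lam * F) + lam ^ 2 * V / 2 := by rw [← hFdef, ← hVdef]; ring
    have hE : (m : ℝ) * ((∑ i, (-(lam * f i) + (lam * f i) ^ 2 / 2)) / N1)
        - (-lam) * ((1 - α) * ((m : ℝ) / N1) * F) ≤ -β := by
      rw [hg, haL]
      have hid : (m : ℝ) * ((-(lam * F) + lam ^ 2 * V / 2) / N1)
          - (-lam) * ((m:ℝ) * e - t) = -(t ^ 2 / (2 * ((m:ℝ) * v))) := by
        rw [hFe, hVv, hlamdef]
        field_simp
        ring
      rw [hid]
      have h2D : (0:ℝ) < 2 * ((m:ℝ) * v) := by linarith only [hmv]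
      have hβle : β ≤ t ^ 2 / (2 * ((m:ℝ) * v)) := by
        rw [le_div_iff₀ h2D]
        linarith only [hkeyL]
      linarith only [hβle]
    have hb := tail_bound' hN1 f (fun i => -(lam * f i) + (lam * f i) ^ 2 / 2) (-lam)
      ((1 - α) * ((m : ℝ) / N1) * F) (-β)
      (fun S : Fin m → Fin N1 => (∑ l : Fin m, f (S l)) ≤ (1 - α) * ((m : ℝ) / N1) * F)
      (fun S hS => mul_le_mul_of_nonpos_left hS (by linarith only [hlampos])) hpt hE
    rw [hexpβ] at hb
    exact hb
  -- union bound
  have hsub : (Finset.univ : Finset (Fin m → Fin N1)) ⊆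
      (Finset.univ.filter fun S : Fin m → Fin N1 =>
          (1 - α) * ((m : ℝ) / N1) * F ≤ ∑ l : Fin m, f (S l) ∧
            ∑ l : Fin m, f (S l) ≤ (1 + α) * ((m : ℝ) / N1) * F) ∪
        ((Finset.univ.filter fun S : Fin m → Fin N1 =>
          (∑ l : Fin m, f (S l)) ≤ (1 - α) * ((m : ℝ) / N1) * F) ∪
         (Finset.univ.filter fun S : Fin m → Fin N1 =>
          (1 + α) * ((m : ℝ) / N1) * F ≤ ∑ l : Fin m, f (S l))) := by
    intro S _
    simp only [Finset.mem_union, Finset.mem_filter, Finset.mem_univ, true_and]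
    by_cases h1 : (1 - α) * ((m : ℝ) / N1) * F ≤ ∑ l : Fin m, f (S l)
    · by_cases h2 : ∑ l : Fin m, f (S l) ≤ (1 + α) * ((m : ℝ) / N1) * F
      · exact Or.inl ⟨h1, h2⟩
      · exact Or.inr (Or.inr (le_of_not_ge h2))
    · exact Or.inr (Or.inl (le_of_not_ge h1))
  have hcards : ((N1:ℝ))^m ≤
      ((Finset.univ.filter fun S : Fin m → Fin N1 =>
          (1 - α) * ((m : ℝ) / N1) * F ≤ ∑ l : Fin m, f (S l) ∧
            ∑ l : Fin m, f (S l) ≤ (1 + α) * ((m : ℝ) / N1) * F).card : ℝ)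
      + (((Finset.univ.filter fun S : Fin m → Fin N1 =>
          (∑ l : Fin m, f (S l)) ≤ (1 - α) * ((m : ℝ) / N1) * F).card : ℝ)
      + ((Finset.univ.filter fun S : Fin m → Fin N1 =>
          (1 + α) * ((m : ℝ) / N1) * F ≤ ∑ l : Fin m, f (S l)).card : ℝ)) := by
    have h1 := Finset.card_le_card hsub
    have h2 := Finset.card_union_le
      (Finset.univ.filter fun S : Fin m → Fin N1 =>
          (1 - α) * ((m : ℝ) / N1) * F ≤ ∑ l : Fin m, f (S l) ∧
            ∑ l : Fin m, f (S l) ≤ (1 + α) * ((m : ℝ) / N1) * F)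
      ((Finset.univ.filter fun S : Fin m → Fin N1 =>
          (∑ l : Fin m, f (S l)) ≤ (1 - α) * ((m : ℝ) / N1) * F) ∪
       (Finset.univ.filter fun S : Fin m → Fin N1 =>
          (1 + α) * ((m : ℝ) / N1) * F ≤ ∑ l : Fin m, f (S l)))
    have h3 := Finset.card_union_le
      (Finset.univ.filter fun S : Fin m → Fin N1 =>
          (∑ l : Fin m, f (S l)) ≤ (1 - α) * ((m : ℝ) / N1) * F)
      (Finset.univ.filter fun S : Fin m → Fin N1 =>
          (1 + α) * ((m : ℝ) / N1) * F ≤ ∑ l : Fin m, f (S l))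
    have h4 : (Finset.univ : Finset (Fin m → Fin N1)).card = N1 ^ m := by
      simp [Finset.card_univ]
    have h5 : N1 ^ m ≤
        (Finset.univ.filter fun S : Fin m → Fin N1 =>
          (1 - α) * ((m : ℝ) / N1) * F ≤ ∑ l : Fin m, f (S l) ∧
            ∑ l : Fin m, f (S l) ≤ (1 + α) * ((m : ℝ) / N1) * F).card
        + ((Finset.univ.filter fun S : Fin m → Fin N1 =>
          (∑ l : Fin m, f (S l)) ≤ (1 - α) * ((m : ℝ) / N1) * F).card
        + (Finset.univ.filter fun S : Fin m → Fin N1 =>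
          (1 + α) * ((m : ℝ) / N1) * F ≤ ∑ l : Fin m, f (S l)).card) := by
      calc N1 ^ m = (Finset.univ : Finset (Fin m → Fin N1)).card := h4.symm
      _ ≤ _ := h1.trans (h2.trans (Nat.add_le_add_left h3 _))
    exact_mod_cast h5
  have hpow : (0:ℝ) < (N1:ℝ) ^ m := by positivity
  rw [le_div_iff₀ hpow]
  linarith only [cardU, cardL, hcards, hρ0, hρ1, hpow]

/-- Lemma 8.3: with probability at least `1 - 2ρ` over `m` indices
drawn independently and uniformly at random (with replacement) from `Fin N1`, the
sampled energy of `z` concentrates around `(m/N1)` times its total energy. -/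
theorem stmt6 (N1 N3 m : ℕ) [NeZero N1] (hN3 : 1 ≤ N3) (hm : 1 ≤ m)
    (ρ : ℝ) (hρ : ρ ∈ Set.Ioo (0 : ℝ) 1)
    (z : Fin N1 → EuclideanSpace ℝ (Fin N3)) (hz : z ≠ 0) :
    1 - 2 * ρ ≤
      ((Finset.univ.filter fun S : Fin m → Fin N1 =>
          (1 - alphaConst z m ρ) * ((m : ℝ) / N1) * tubeEnergy z ≤
              ∑ l : Fin m, ‖z (S l)‖ ^ 2 ∧
            ∑ l : Fin m, ‖z (S l)‖ ^ 2 ≤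
              (1 + alphaConst z m ρ) * ((m : ℝ) / N1) * tubeEnergy z).card : ℝ)
        / (N1 : ℝ) ^ m := by
  obtain ⟨hρ0, hρ1⟩ := hρ
  have hN1pos : 0 < N1 := Nat.pos_of_ne_zero (NeZero.ne N1)
  obtain ⟨i₀, hi₀⟩ := Function.ne_iff.mp hz
  have hzi₀ : z i₀ ≠ 0 := by simpa using hi₀
  have hFpos : 0 < ∑ i : Fin N1, ‖z i‖ ^ 2 :=
    Finset.sum_pos' (fun i _ => sq_nonneg _)
      ⟨i₀, Finset.mem_univ i₀, by
        have : 0 < ‖z i₀‖ := norm_pos_iff.mpr hzi₀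
        positivity⟩
  exact main_count hN1pos hm (fun i => ‖z i‖ ^ 2)
    (Finset.univ.sup' Finset.univ_nonempty fun i : Fin N1 => ‖z i‖ ^ 2) ρ
    (alphaConst z m ρ) hρ0 hρ1 (fun i => sq_nonneg _)
    (fun i => Finset.le_sup' (fun j : Fin N1 => ‖z j‖ ^ 2) (Finset.mem_univ i)) hFpos rfl
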